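/- Let V be a 2-dimensional real vector space and L : V → V an ℝ-linear endomorphism that is not a real scalar multiple of the identity. If J and J' are complex structures on V (i.e. J ∘ J = −id and J' ∘ J' = −id) and both commute with L, then J' = J or J' = −J. -/

import Mathlib

/-- Let `V` be a 2-dimensional real vector space and `L : V → V` an
ℝ-linear endomorphism that is not a real scalar multiple of the identity. If `J` and
`J'` are complex structures on `V` and both commute with `L`, then `J' = J` or
`J' = -J`. -/
theorem stmt_2 (V : Type*) [AddCommGroup V] [Module ℝ V]
    (hV : Module.finrank ℝ V = 2)
    (L : V →ₗ[ℝ] V) (hLid : ∀ c : ℝ, L ≠ c • LinearMap.id)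
    (J J' : V →ₗ[ℝ] V)
    (hJ : ∀ x, J (J x) = -x) (hJ' : ∀ x, J' (J' x) = -x)
    (hJL : J ∘ₗ L = L ∘ₗ J) (hJ'L : J' ∘ₗ L = L ∘ₗ J') :
    J' = J ∨ J' = -J := by
  have hfin : FiniteDimensional ℝ V := Module.finite_of_finrank_pos (by rw [hV]; norm_num)
  have hnt : Nontrivial V := Module.nontrivial_of_finrank_pos (R := ℝ) (by rw [hV]; norm_num)
  obtain ⟨v, hv⟩ := exists_ne (0 : V)
  -- v, J v linearly independent
  have hli : LinearIndependent ℝ ![v, J v] := by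
    rw [LinearIndependent.pair_iff]
    intro s t hst
    have h2 : s • J v = t • v := by
      have h := congrArg J hst
      simp only [map_add, map_smul, hJ v, map_zero, smul_neg] at h
      exact eq_of_sub_eq_zero (by rwa [sub_eq_add_neg])
    have hzero : (s ^ 2 + t ^ 2) • v = 0 := by
      linear_combination (norm := module) s • hst - t • h2
    have hst0 : s ^ 2 + t ^ 2 = 0 := by
      by_contra h
      exact hv (by simpa [h] using smul_eq_zero.mp hzero)
    constructor <;> nlinarith [sq_nonneg s, sq_nonneg t]
  -- span
  have hspan : Submodule.span ℝ ({v, J v} : Set V) = ⊤ := by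
    let B : Module.Basis (Fin 2) ℝ V := basisOfLinearIndependentOfCardEqFinrank hli (by simp [hV])
    have hB : ⇑B = ![v, J v] := coe_basisOfLinearIndependentOfCardEqFinrank hli _
    have hr : Set.range B = ({v, J v} : Set V) := by
      rw [hB]
      ext x
      simp only [Set.mem_range, Set.mem_insert_iff, Set.mem_singleton_iff]
      constructor
      · rintro ⟨i, rfl⟩; fin_cases i <;> simp
      · rintro (rfl | rfl); exacts [⟨0, rfl⟩, ⟨1, rfl⟩]
    rw [← hr]; exact B.span_eq
  have key : ∀ w : V, ∃ a b : ℝ, a • v + b • J v = w := fun w =>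
    Submodule.mem_span_pair.mp (hspan ▸ Submodule.mem_top)
  have hind : ∀ s t : ℝ, s • v + t • J v = 0 → s = 0 ∧ t = 0 :=
    LinearIndependent.pair_iff.mp hli
  have hext : ∀ f g : V →ₗ[ℝ] V, f v = g v → f (J v) = g (J v) → f = g := by
    intro f g h1 h2
    refine LinearMap.ext_on hspan ?_
    intro x hx
    rcases hx with rfl | rfl
    · exact h1
    · exact h2
  -- L = a • id + b • J
  obtain ⟨a, b, hab⟩ := key (L v)
  have hJLv : J (L v) = L (J v) := congrFun (congrArg DFunLike.coe hJL) v
  have hLeq : L = a • LinearMap.id + b • J := by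
    refine hext _ _ ?_ ?_
    · simp only [LinearMap.add_apply, LinearMap.smul_apply, LinearMap.id_apply]
      rw [← hab]
    · simp only [LinearMap.add_apply, LinearMap.smul_apply, LinearMap.id_apply]
      rw [← hJLv, ← hab]
      simp only [map_add, map_smul, hJ v, smul_neg]
  have hb : b ≠ 0 := fun h => hLid a (by rw [hLeq, h, zero_smul, add_zero])
  -- J' commutes with J
  have hcomm' : ∀ x, J' (J x) = J (J' x) := by
    intro x
    have hx := congrFun (congrArg DFunLike.coe hJ'L) x
    rw [hLeq] at hx
    simp only [LinearMap.comp_apply, LinearMap.add_apply, LinearMap.smul_apply,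
      LinearMap.id_apply, map_add, map_smul] at hx
    have hbx : b • J' (J x) = b • J (J' x) := add_left_cancel hx
    exact smul_right_injective V hb hbx
  -- J' = c • id + d • J
  obtain ⟨c, d, hcd⟩ := key (J' v)
  have hJ'eq : J' = c • LinearMap.id + d • J := by
    refine hext _ _ ?_ ?_
    · simp only [LinearMap.add_apply, LinearMap.smul_apply, LinearMap.id_apply]
      rw [← hcd]
    · simp only [LinearMap.add_apply, LinearMap.smul_apply, LinearMap.id_apply]
      rw [hcomm' v, ← hcd]
      simp only [map_add, map_smul, hJ v, smul_neg]
  -- use J'^2 = -1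
  have hsq : J' (J' v) = -v := hJ' v
  have h1 : J' (J' v) = (c ^ 2 - d ^ 2) • v + (2 * c * d) • J v := by
    rw [hJ'eq]
    simp only [LinearMap.add_apply, LinearMap.smul_apply, LinearMap.id_apply,
      map_add, map_smul, hJ v, smul_neg]
    module
  have hexp : (c ^ 2 - d ^ 2 + 1) • v + (2 * c * d) • J v = 0 := by
    rw [hsq] at h1
    linear_combination (norm := module) -h1
  obtain ⟨h1', h2'⟩ := hind _ _ hexp
  have hc : c = 0 := by
    by_contra hc
    have hd : d = 0 := by
      rcases mul_eq_zero.mp (by linarith : c * d = 0) with h | h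
      · exact absurd h hc
      · exact h
    rw [hd] at h1'; nlinarith
  rw [hc] at h1'
  have hd : d = 1 ∨ d = -1 := mul_self_eq_one_iff.mp (by nlinarith : d * d = 1)
  rcases hd with hd | hd
  · left; rw [hJ'eq, hc, hd]; ext x; simp
  · right; rw [hJ'eq, hc, hd]; ext x; simp
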